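/- Let μ_{k_s}, μ_{l_s} ∈ (0,1) and consider a finite set S of points in ℝ^d with diameter D realized by the pair (p, q) (i.e., ‖p − q‖ = D = max distance in S). Replace p by p' = (1−μ_{k_s})p + μ_{k_s}q and q by q' = (1−μ_{l_s})q + μ_{l_s}p, keeping all other points fixed. Then ‖p' − q'‖ = |1 − μ_{k_s} − μ_{l_s}|·D, and for every other point z ∈ S, ‖z − p'‖ ≤ √(1 − μ_{k_s} + μ_{k_s}²)·D and ‖z − q'‖ ≤ √(1 − μ_{l_s} + μ_{l_s}²)·D. -/

import Mathlib

lemma aux16 {E : Type*} [NormedAddCommGroup E] [InnerProductSpace ℝ E]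
    (x y z : E) (r μ : ℝ) (hr : 0 ≤ r) (hxy : ‖x - y‖ = r)
    (hx : ‖z - x‖ ≤ r) (hy : ‖z - y‖ ≤ r) (hμ : 0 ≤ μ) (hμ1 : μ ≤ 1) :
    ‖z - ((1 - μ) • x + μ • y)‖ ≤ Real.sqrt (1 - μ + μ ^ 2) * r := by
  have key : z - ((1 - μ) • x + μ • y) = (1 - μ) • (z - x) + μ • (z - y) := by
    simp [smul_sub, sub_smul]; abel
  set a := z - x
  set b := z - y
  have hab : ‖a - b‖ = r := by
    have : a - b = y - x := by simp [a, b]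
    rw [this, ← hxy, norm_sub_rev]
  have hinner : 2 * inner ℝ a b = ‖a‖ ^ 2 + ‖b‖ ^ 2 - r ^ 2 := by
    have := @norm_sub_sq_real E _ _ a b
    rw [hab] at this
    nlinarith [this]
  have hsq : ‖(1 - μ) • a + μ • b‖ ^ 2 ≤ (1 - μ + μ ^ 2) * r ^ 2 := by
    have h := @norm_add_sq_real E _ _ ((1 - μ) • a) (μ • b)
    rw [norm_smul, norm_smul, real_inner_smul_left, real_inner_smul_right] at h
    have ha2 : ‖a‖ ^ 2 ≤ r ^ 2 := by nlinarith [norm_nonneg a]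
    have hb2 : ‖b‖ ^ 2 ≤ r ^ 2 := by nlinarith [norm_nonneg b]
    have h1 : |1 - μ| = 1 - μ := abs_of_nonneg (by linarith)
    have h2 : |μ| = μ := abs_of_nonneg hμ
    rw [Real.norm_eq_abs, Real.norm_eq_abs, h1, h2] at h
    nlinarith [hinner]
  rw [key]
  have hnn : (0:ℝ) ≤ 1 - μ + μ ^ 2 := by nlinarith
  calc ‖(1 - μ) • a + μ • b‖ = Real.sqrt (‖(1 - μ) • a + μ • b‖ ^ 2) := by
        rw [Real.sqrt_sq (norm_nonneg _)]
    _ ≤ Real.sqrt ((1 - μ + μ ^ 2) * r ^ 2) := Real.sqrt_le_sqrt hsq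
    _ = Real.sqrt (1 - μ + μ ^ 2) * r := by
        rw [Real.sqrt_mul hnn, Real.sqrt_sq hr]

theorem stmt16 (d : ℕ) (μk μl D : ℝ)
    (hμk : μk ∈ Set.Ioo (0:ℝ) 1) (hμl : μl ∈ Set.Ioo (0:ℝ) 1) (hD : 0 < D)
    (S : Finset (EuclideanSpace ℝ (Fin d)))
    (p q : EuclideanSpace ℝ (Fin d)) (hp : p ∈ S) (hq : q ∈ S)
    (hpq : ‖p - q‖ = D) (hmax : ∀ x ∈ S, ∀ y ∈ S, ‖x - y‖ ≤ D) :
    ‖((1 - μk) • p + μk • q) - ((1 - μl) • q + μl • p)‖ = |1 - μk - μl| * D ∧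
    ∀ z ∈ S, z ≠ p → z ≠ q →
      ‖z - ((1 - μk) • p + μk • q)‖ ≤ Real.sqrt (1 - μk + μk ^ 2) * D ∧
      ‖z - ((1 - μl) • q + μl • p)‖ ≤ Real.sqrt (1 - μl + μl ^ 2) * D := by
  constructor
  · have : ((1 - μk) • p + μk • q) - ((1 - μl) • q + μl • p)
        = (1 - μk - μl) • (p - q) := by
      rw [smul_sub, sub_smul, sub_smul]; simp [smul_sub, sub_smul]; abel
    rw [this, norm_smul, Real.norm_eq_abs, hpq]
  · intro z hz hzp hzq
    have hzP : ‖z - p‖ ≤ D := hmax z hz p hp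
    have hzQ : ‖z - q‖ ≤ D := hmax z hz q hq
    exact ⟨aux16 p q z D μk hD.le hpq hzP hzQ hμk.1.le hμk.2.le,
      aux16 q p z D μl hD.le (by rw [norm_sub_rev, hpq]) hzQ hzP hμl.1.le hμl.2.le⟩
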